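/- Let g_1,...,g_n be vectors in K^{n-d-1} (K = ℝ or ℂ, n ≥ d+2) such that the g_i linearly span K^{n-d-1} and ∑_{i=1}^n g_i = 0. Then there exists a sequence a_1,...,a_n of affinely spanning points in K^d whose Gale transform is g_1,...,g_n. -/

import Mathlib

/-- The `(d+1) × n` matrix whose `j`-th column is `(a j, 1)`. -/
noncomputable def galeMatrix {K : Type*} [RCLike K] {d n : ℕ}
    (a : Fin n → Fin d → K) : Matrix (Fin (d + 1)) (Fin n) K :=
  fun i j => if h : (i : ℕ) < d then a j ⟨i, h⟩ else 1

/-- `g` is a Gale transform of `a`: there is a basis `b` of `ker A` such that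
`(g j) i = conj ((b i) j)`. -/
def IsGaleTransform {K : Type*} [RCLike K] {d n : ℕ}
    (a : Fin n → Fin d → K) (g : Fin n → Fin (n - d - 1) → K) : Prop :=
  ∃ b : Fin (n - d - 1) → (Fin n → K),
    (∀ i, (galeMatrix a).mulVecLin (b i) = 0) ∧
    LinearIndependent K b ∧
    Submodule.span K (Set.range b) = LinearMap.ker (galeMatrix a).mulVecLin ∧
    (∀ j i, g j i = starRingEnd K (b i j))

/-- In a finite-dimensional vector space, any subspace `V` of dimension `d+1`
containing a nonzero vector `o1` has a linearly independent family of `d+1`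
vectors in `V` whose last member is `o1`. -/
lemma exists_rows_aux {F W : Type*} [Field F] [AddCommGroup W] [Module F W]
    [FiniteDimensional F W] {d : ℕ} (V : Submodule F W)
    (hfin : Module.finrank F V = d + 1) (o1 : W) (ho1 : o1 ∈ V) (ho1ne : o1 ≠ 0) :
    ∃ r : Fin (d + 1) → W,
      LinearIndependent F r ∧ (∀ k, r k ∈ V) ∧ r (Fin.last d) = o1 := by
  set o : V := ⟨o1, ho1⟩ with hodef
  have ho : o ≠ 0 := fun h => ho1ne (congrArg Subtype.val h)
  obtain ⟨C, hC⟩ := Submodule.exists_isCompl (F ∙ o)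
  have hCrank : Module.finrank F C = d := by
    have h1 := Submodule.finrank_add_eq_of_isCompl hC
    rw [finrank_span_singleton ho, hfin] at h1
    omega
  obtain ⟨c⟩ : Nonempty (Module.Basis (Fin d) F C) := ⟨Module.finBasisOfFinrankEq F C hCrank⟩
  set rV : Fin (d + 1) → V := Fin.snoc (fun i => (c i : V)) o with hrVdef
  have hrV_li : LinearIndependent F rV := by
    rw [Fintype.linearIndependent_iff]
    intro coef hc
    rw [Fin.sum_univ_castSucc] at hc
    simp only [hrVdef, Fin.snoc_castSucc, Fin.snoc_last] at hc
    set x : V := ∑ i : Fin d, coef i.castSucc • (c i : V) with hxdef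
    have hxC : x ∈ C := Submodule.sum_mem _ fun i _ => C.smul_mem _ (c i).2
    have hxo : x ∈ (F ∙ o) := by
      have hx : x = -(coef (Fin.last d) • o) := by
        rw [eq_neg_iff_add_eq_zero]; exact hc
      rw [hx]
      exact Submodule.neg_mem _ (Submodule.smul_mem _ _ (Submodule.mem_span_singleton_self o))
    have hx0 : x = 0 := by
      have hd := hC.disjoint
      rw [Submodule.disjoint_def] at hd
      exact hd x hxo hxC
    have hlast : coef (Fin.last d) = 0 := by
      rw [hx0, zero_add] at hc
      rcases smul_eq_zero.1 hc with h | h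
      · exact h
      · exact absurd h ho
    have hcast : ∀ i : Fin d, coef i.castSucc = 0 := by
      have hli : LinearIndependent F (fun i => (c i : V)) :=
        c.linearIndependent.map' C.subtype C.ker_subtype
      exact Fintype.linearIndependent_iff.1 hli (fun i => coef i.castSucc) hx0
    intro i
    refine Fin.lastCases ?_ ?_ i
    · exact hlast
    · exact hcast
  refine ⟨fun i => (rV i : W), hrV_li.map' V.subtype V.ker_subtype,
    fun k => (rV k).2, ?_⟩
  simp [hrVdef, Fin.snoc_last, hodef]

/-- any spanning sequence summing to zero is a Gale transform of some
affinely spanning sequence. -/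
theorem stmt2 {K : Type*} [RCLike K] (d n : ℕ) (hn : d + 2 ≤ n)
    (g : Fin n → Fin (n - d - 1) → K)
    (hspan : Submodule.span K (Set.range g) = ⊤)
    (hsum : ∑ i, g i = 0) :
    ∃ a : Fin n → Fin d → K,
      affineSpan K (Set.range a) = ⊤ ∧ IsGaleTransform a g := by
  have hnpos : 0 < n := by omega
  set b : Fin (n - d - 1) → Fin n → K := fun i j => starRingEnd K (g j i) with hbdef
  -- linear independence of b
  have hb_li : LinearIndependent K b := by
    rw [Fintype.linearIndependent_iff]
    intro c hc i
    set f : (Fin (n - d - 1) → K) →ₗ[K] K :=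
      { toFun := fun x => ∑ k, starRingEnd K (c k) * x k
        map_add' := by intro x y; simp [mul_add, Finset.sum_add_distrib]
        map_smul' := by intro s x; simp [mul_left_comm, Finset.mul_sum] }
    have hf : ∀ v ∈ Submodule.span K (Set.range g), f v = 0 := by
      intro v hv
      induction hv using Submodule.span_induction with
      | mem v hv =>
        obtain ⟨j, rfl⟩ := hv
        have := congrFun hc j
        simp only [Finset.sum_apply, Pi.smul_apply, smul_eq_mul, Pi.zero_apply, b] at this
        have : starRingEnd K (∑ k, c k * starRingEnd K (g j k)) = 0 := by rw [this]; simp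
        simpa [f, map_sum, mul_comm] using this
      | zero => simp
      | add x y _ _ hx hy => simp [hx, hy]
      | smul s x _ hx => simp [hx]
    have : f (Pi.single i 1) = 0 := hf _ (hspan ▸ Submodule.mem_top)
    simp only [f, LinearMap.coe_mk, AddHom.coe_mk] at this
    rw [Finset.sum_eq_single i] at this
    · simpa using congrArg (starRingEnd K) this
    · intro k _ hk; simp [Pi.single_apply, hk]
    · simp
  set B : Matrix (Fin (n - d - 1)) (Fin n) K := Matrix.of b with hBdef
  obtain ⟨V, hVeq⟩ : ∃ V : Submodule K (Fin n → K), V = LinearMap.ker B.mulVecLin := ⟨_, rfl⟩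
  have hrankB : B.rank = n - d - 1 := by
    rw [Matrix.rank_eq_finrank_span_row]
    have : Set.range B.row = Set.range b := rfl
    rw [this, finrank_span_eq_card hb_li, Fintype.card_fin]
  have hfinV : Module.finrank K V = d + 1 := by
    have h1 := LinearMap.finrank_range_add_finrank_ker B.mulVecLin
    have h2 : Module.finrank K (Fin n → K) = n := by
      simp [Module.finrank_pi]
    rw [h2] at h1
    have h3 : Module.finrank K (LinearMap.range B.mulVecLin) = n - d - 1 := hrankB
    rw [hVeq]
    omega
  -- the all-ones vector
  have ho1V : (fun _ => (1:K) : Fin n → K) ∈ V := by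
    rw [hVeq, LinearMap.mem_ker]
    funext i
    simp only [Matrix.mulVecLin_apply, Matrix.mulVec, dotProduct, Pi.zero_apply,
      hBdef, Matrix.of_apply, mul_one, hbdef]
    have := congrFun hsum i
    simp only [Finset.sum_apply, Pi.zero_apply] at this
    rw [← map_sum, this, map_zero]
  have ho1ne : (fun _ => (1:K) : Fin n → K) ≠ 0 := by
    intro h
    have := congrFun h ⟨0, hnpos⟩
    simp at this
  obtain ⟨r, hr_li, hrmemV, hrlast⟩ := exists_rows_aux V hfinV _ ho1V ho1ne
  set a : Fin n → Fin d → K := fun j i => r i.castSucc j with hadef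
  have hA : ∀ i, galeMatrix a i = r i := by
    intro i
    funext j
    by_cases h : (i : ℕ) < d
    · show (if h' : (i : ℕ) < d then a j ⟨i, h'⟩ else 1) = r i j
      rw [dif_pos h]
      have hcs : Fin.castSucc ⟨(i : ℕ), h⟩ = i := by
        ext; rfl
      show r (Fin.castSucc ⟨(i : ℕ), h⟩) j = r i j
      rw [hcs]
    · have hi : i = Fin.last d := by
        have := i.isLt
        ext
        simp only [Fin.val_last]
        omega
      rw [hi, hrlast]
      show (if h' : ((Fin.last d : Fin (d+1)) : ℕ) < d then a j ⟨_, h'⟩ else 1) = 1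
      rw [dif_neg (by simp)]
  -- rows lie in V, so A kills each b i
  have hkerA : ∀ i, (galeMatrix a).mulVecLin (b i) = 0 := by
    intro i
    funext k
    simp only [Matrix.mulVecLin_apply, Matrix.mulVec, dotProduct, Pi.zero_apply]
    have hk := hrmemV k
    rw [hVeq, LinearMap.mem_ker] at hk
    have := congrFun hk i
    simp only [Matrix.mulVecLin_apply, Matrix.mulVec, dotProduct, Pi.zero_apply,
      hBdef, Matrix.of_apply] at this
    calc ∑ j, galeMatrix a k j * b i j = ∑ j, b i j * r k j := by
          refine Finset.sum_congr rfl fun j _ => ?_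
          rw [congrFun (hA k) j, mul_comm]
      _ = 0 := this
  -- rank of A
  have hArank : (galeMatrix a).rank = d + 1 := by
    rw [Matrix.rank_eq_finrank_span_row]
    have hAr : Set.range (galeMatrix a).row = Set.range r :=
      congrArg Set.range (funext hA)
    rw [hAr, finrank_span_eq_card hr_li, Fintype.card_fin]
  have hkerdim : Module.finrank K (LinearMap.ker (galeMatrix a).mulVecLin) = n - d - 1 := by
    have h1 := LinearMap.finrank_range_add_finrank_ker (galeMatrix a).mulVecLin
    have h2 : Module.finrank K (Fin n → K) = n := by simp [Module.finrank_pi]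
    rw [h2] at h1
    have h3 : Module.finrank K (LinearMap.range (galeMatrix a).mulVecLin) = d + 1 := hArank
    omega
  have hker_eq : Submodule.span K (Set.range b) = LinearMap.ker (galeMatrix a).mulVecLin := by
    apply Submodule.eq_of_le_of_finrank_eq
    · rw [Submodule.span_le]
      rintro _ ⟨i, rfl⟩
      exact hkerA i
    · rw [hkerdim, finrank_span_eq_card hb_li, Fintype.card_fin]
  -- surjectivity of A
  have hAsurj : Function.Surjective (galeMatrix a).mulVecLin := by
    rw [← LinearMap.range_eq_top]
    apply Submodule.eq_top_of_finrank_eq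
    have h3 : Module.finrank K (LinearMap.range (galeMatrix a).mulVecLin) = d + 1 := hArank
    rw [h3]; simp [Module.finrank_pi]
  -- affine span
  have haff : affineSpan K (Set.range a) = ⊤ := by
    have hne : (Set.range a).Nonempty := ⟨a ⟨0, hnpos⟩, Set.mem_range_self _⟩
    rw [AffineSubspace.affineSpan_eq_top_iff_vectorSpan_eq_top_of_nonempty K (Fin d → K) (Fin d → K) hne]
    rw [eq_top_iff]
    rintro v -
    obtain ⟨x, hx⟩ := hAsurj (fun k => if h : (k : ℕ) < d then v ⟨k, h⟩ else 0)
    have hsum0 : ∑ j, x j = 0 := by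
      have := congrFun hx (Fin.last d)
      simpa [Matrix.mulVecLin_apply, Matrix.mulVec, dotProduct, galeMatrix] using this
    have hv : ∀ i : Fin d, ∑ j, a j i * x j = v i := by
      intro i
      have := congrFun hx i.castSucc
      simpa [Matrix.mulVecLin_apply, Matrix.mulVec, dotProduct, galeMatrix,
        i.isLt, mul_comm] using this
    have hveq : v = ∑ j, x j • (a j - a ⟨0, hnpos⟩) := by
      funext i
      simp only [Finset.sum_apply, Pi.smul_apply, Pi.sub_apply, smul_eq_mul, mul_sub]
      rw [Finset.sum_sub_distrib, ← Finset.sum_mul]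
      have h1 : ∑ j, x j * a j i = v i := by
        rw [← hv i]; exact Finset.sum_congr rfl fun j _ => mul_comm _ _
      rw [h1, hsum0, zero_mul, sub_zero]
    rw [hveq]
    refine Submodule.sum_mem _ fun j _ => Submodule.smul_mem _ _ ?_
    exact vsub_mem_vectorSpan (k := K) (Set.mem_range_self j) (Set.mem_range_self (⟨0, hnpos⟩ : Fin n))
  exact ⟨a, haff, b, hkerA, hb_li, hker_eq, fun j i => by simp [hbdef]⟩
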